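/- Suppose positive integers x_1,…,x_n satisfy 1/x_1 + ⋯ + 1/x_n = 1, a prime p divides at least one x_i, and α = max_i v_p(x_i) is attained exactly at the indices i_1,…,i_s with s ≥ 2. Write x_{i_t} = p^α · x'_{i_t} with p not dividing x'_{i_t}. Let β = max over j not in {i_1,…,i_s} of v_p(x_j). Then β < α and p^{α−β} divides σ_{s−1}(x'_{i_1},…,x'_{i_s}), the (s−1)-st elementary symmetric polynomial of the x'_{i_t}. -/

import Mathlib

open Finset

lemma aux_sum_powersetCard {γ : Type*} [DecidableEq γ] (S : Finset γ) (hne : S.Nonempty)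
    (f : γ → ℕ) :
    ∑ i ∈ S, ∏ j ∈ S.erase i, f j
      = ∑ t ∈ S.powersetCard (S.card - 1), ∏ i ∈ t, f i := by
  have hpos : 0 < S.card := Finset.card_pos.mpr hne
  have hkey : ∀ t ∈ S.powersetCard (S.card - 1), (S \ t).Nonempty := by
    intro t ht
    have ht' := Finset.mem_powersetCard.mp ht
    rw [← Finset.card_pos, Finset.card_sdiff_of_subset ht'.1, ht'.2]
    omega
  refine Finset.sum_bij' (fun a _ => S.erase a) (fun t ht => (hkey t ht).choose)
    ?_ ?_ ?_ ?_ ?_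
  · intro a ha
    rw [Finset.mem_powersetCard]
    exact ⟨Finset.erase_subset _ _, by rw [Finset.card_erase_of_mem ha]⟩
  · intro t ht
    exact (Finset.mem_sdiff.mp (hkey t ht).choose_spec).1
  · intro a ha
    have h2 := Finset.mem_sdiff.mp (hkey _ (by
      rw [Finset.mem_powersetCard]
      exact ⟨Finset.erase_subset _ _, by rw [Finset.card_erase_of_mem ha]⟩)).choose_spec
    by_contra hne'
    exact h2.2 (Finset.mem_erase.mpr ⟨hne', h2.1⟩)
  · intro t ht
    have ht' := Finset.mem_powersetCard.mp ht
    have h2 := Finset.mem_sdiff.mp (hkey t ht).choose_spec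
    have hsub : t ⊆ S.erase ((hkey t ht).choose) := by
      intro j hj
      exact Finset.mem_erase.mpr ⟨fun h => h2.2 (h ▸ hj), ht'.1 hj⟩
    refine (Finset.eq_of_subset_of_card_le hsub ?_).symm
    rw [Finset.card_erase_of_mem h2.1, ht'.2]
  · intro a ha; rfl

theorem stmt_4 (n : ℕ) (x : Fin n → ℕ) (hx : ∀ i, 0 < x i)
    (hsum : ∑ i, (1 : ℚ) / x i = 1) (p : ℕ) (hp : p.Prime)
    (hdvd : ∃ i, p ∣ x i)
    (α : ℕ) (hα : α = Finset.univ.sup (fun i => padicValNat p (x i)))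
    (S : Finset (Fin n)) (hS : S = Finset.univ.filter (fun i => padicValNat p (x i) = α))
    (hcard : 2 ≤ S.card)
    (β : ℕ) (hβ : β = (Finset.univ \ S).sup (fun i => padicValNat p (x i))) :
    β < α ∧
      p ^ (α - β) ∣
        ∑ t ∈ S.powersetCard (S.card - 1), ∏ i ∈ t, (x i / p ^ α) := by
  have hppos : 0 < p := hp.pos
  set a : Fin n → ℕ := fun i => padicValNat p (x i) with ha
  set y : Fin n → ℕ := fun i => x i / p ^ a i with hy
  have hfac : ∀ i, a i = (x i).factorization p := fun i =>
    (Nat.factorization_def (x i) hp).symm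
  have hxy : ∀ i, x i = p ^ a i * y i := by
    intro i
    have := Nat.ordProj_mul_ordCompl_eq_self (x i) p
    rw [← hfac i] at this
    exact this.symm
  have hpy : ∀ i, ¬ p ∣ y i := by
    intro i
    have := Nat.not_dvd_ordCompl hp (hx i).ne'
    rwa [← hfac i] at this
  -- a i = α on S
  have haS : ∀ i ∈ S, a i = α := by
    intro i hi; rw [hS, Finset.mem_filter] at hi; exact hi.2
  have haα : ∀ i, a i ≤ α := fun i => hα ▸ Finset.le_sup (Finset.mem_univ i)
  -- α positive
  have hαpos : 0 < α := by
    obtain ⟨i, hi⟩ := hdvd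
    have h1 : 1 ≤ a i := by
      rw [hfac i]
      exact (Nat.Prime.pow_dvd_iff_le_factorization hp (hx i).ne').mp (by simpa using hi)
    exact lt_of_lt_of_le h1 (haα i)
  -- β < α
  have hβα : β < α := by
    rw [hβ]
    apply Finset.sup_lt_iff (by simpa using hαpos) |>.mpr
    intro j hj
    rw [Finset.mem_sdiff, hS, Finset.mem_filter] at hj
    have : a j ≠ α := fun h => hj.2 ⟨Finset.mem_univ j, h⟩
    exact lt_of_le_of_ne (haα j) this
  refine ⟨hβα, ?_⟩
  -- nat identity from the rational sum
  have hxQ : ∀ i, (x i : ℚ) ≠ 0 := fun i => Nat.cast_ne_zero.mpr (hx i).ne'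
  have hid1 : ∑ i, ∏ j ∈ Finset.univ.erase i, x j = ∏ j, x j := by
    have hQ : ∑ i, ∏ j ∈ Finset.univ.erase i, (x j : ℚ) = ∏ j, (x j : ℚ) := by
      calc ∑ i, ∏ j ∈ Finset.univ.erase i, (x j : ℚ)
          = ∑ i, (1 / x i) * ∏ j, (x j : ℚ) := by
            refine Finset.sum_congr rfl fun i _ => ?_
            rw [← Finset.mul_prod_erase Finset.univ (fun j => (x j : ℚ)) (Finset.mem_univ i),
              ← mul_assoc, one_div, inv_mul_cancel₀ (hxQ i), one_mul]
        _ = (∑ i, (1 : ℚ) / x i) * ∏ j, (x j : ℚ) := by rw [Finset.sum_mul]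
        _ = ∏ j, (x j : ℚ) := by rw [hsum, one_mul]
    exact_mod_cast hQ
  set A : ℕ := ∑ i, a i with hA
  have hαA : α ≤ A := by
    have hne : S.Nonempty := Finset.card_pos.mp (by omega)
    obtain ⟨i0, hi0⟩ := hne
    calc α = a i0 := (haS i0 hi0).symm
      _ ≤ A := Finset.single_le_sum (fun i _ => Nat.zero_le _) (Finset.mem_univ i0)
  -- key identity
  have hid2 : p ^ α * ∏ j, y j = ∑ i, p ^ (α - a i) * ∏ j ∈ Finset.univ.erase i, y j := by
    apply Nat.eq_of_mul_eq_mul_left (pow_pos hppos (A - α))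
    calc p ^ (A - α) * (p ^ α * ∏ j, y j)
        = p ^ A * ∏ j, y j := by
          rw [← mul_assoc, ← pow_add]
          congr 2
          omega
      _ = ∏ j, x j := by
          rw [Finset.prod_congr rfl (fun j _ => hxy j), Finset.prod_mul_distrib,
            Finset.prod_pow_eq_pow_sum]
      _ = ∑ i, ∏ j ∈ Finset.univ.erase i, x j := hid1.symm
      _ = ∑ i, p ^ (A - α) * (p ^ (α - a i) * ∏ j ∈ Finset.univ.erase i, y j) := by
          refine Finset.sum_congr rfl fun i _ => ?_
          rw [← mul_assoc, ← pow_add]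
          have hsumerase : ∑ j ∈ Finset.univ.erase i, a j = A - a i := by
            have := Finset.sum_erase_add Finset.univ a (Finset.mem_univ i)
            omega
          rw [Finset.prod_congr rfl (fun j _ => hxy j), Finset.prod_mul_distrib,
            Finset.prod_pow_eq_pow_sum, hsumerase]
          congr 2
          have := haα i
          omega
      _ = p ^ (A - α) * ∑ i, p ^ (α - a i) * ∏ j ∈ Finset.univ.erase i, y j := by
          rw [Finset.mul_sum]
  -- split the sum
  have hsplit := Finset.sum_sdiff (f := fun i => p ^ (α - a i) * ∏ j ∈ Finset.univ.erase i, y j)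
    (S.subset_univ)
  -- compute S-part
  set E : ℕ := ∑ i ∈ S, ∏ j ∈ S.erase i, y j with hE
  set Q : ℕ := ∏ j ∈ Finset.univ \ S, y j with hQ
  have hSpart : ∑ i ∈ S, p ^ (α - a i) * ∏ j ∈ Finset.univ.erase i, y j = E * Q := by
    rw [hE, Finset.sum_mul]
    refine Finset.sum_congr rfl fun i hi => ?_
    rw [haS i hi, Nat.sub_self, pow_zero, one_mul]
    have hsetsplit : Finset.univ.erase i = S.erase i ∪ (Finset.univ \ S) := by
      ext j
      constructor
      · intro hj
        rw [Finset.mem_erase] at hj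
        rw [Finset.mem_union]
        by_cases hjS : j ∈ S
        · exact Or.inl (Finset.mem_erase.mpr ⟨hj.1, hjS⟩)
        · exact Or.inr (Finset.mem_sdiff.mpr ⟨Finset.mem_univ j, hjS⟩)
      · intro hj
        rw [Finset.mem_union] at hj
        rw [Finset.mem_erase]
        refine ⟨?_, Finset.mem_univ j⟩
        rcases hj with hj | hj
        · exact (Finset.mem_erase.mp hj).1
        · rintro rfl
          exact (Finset.mem_sdiff.mp hj).2 hi
    rw [hsetsplit, Finset.prod_union]
    rw [Finset.disjoint_left]
    intro j hj1 hj2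
    exact (Finset.mem_sdiff.mp hj2).2 (Finset.mem_of_mem_erase hj1)
  -- divisibility
  have hdvd1 : p ^ (α - β) ∣ p ^ α * ∏ j, y j :=
    dvd_mul_of_dvd_left (pow_dvd_pow p (Nat.sub_le α β)) _
  have hdvd2 : p ^ (α - β) ∣ ∑ i ∈ Finset.univ \ S, p ^ (α - a i) * ∏ j ∈ Finset.univ.erase i, y j := by
    refine Finset.dvd_sum fun i hi => ?_
    have hiβ : a i ≤ β := hβ ▸ Finset.le_sup hi
    exact dvd_mul_of_dvd_left (pow_dvd_pow p (by omega)) _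
  have hEQ : p ^ (α - β) ∣ E * Q := by
    have hsplit2 : (∑ i ∈ Finset.univ \ S, p ^ (α - a i) * ∏ j ∈ Finset.univ.erase i, y j)
        + E * Q = p ^ α * ∏ j, y j := by
      rw [hid2, ← hSpart]
      exact hsplit
    have : E * Q = p ^ α * ∏ j, y j -
        ∑ i ∈ Finset.univ \ S, p ^ (α - a i) * ∏ j ∈ Finset.univ.erase i, y j := by
      omega
    rw [this]
    exact Nat.dvd_sub hdvd1 hdvd2
  have hcop : Nat.Coprime (p ^ (α - β)) Q := by
    apply Nat.Coprime.pow_left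
    rw [Nat.coprime_comm]
    apply Nat.Coprime.symm
    apply (Nat.Prime.coprime_iff_not_dvd hp).mpr
    intro hdQ
    obtain ⟨j, _, hj⟩ := (Prime.dvd_finset_prod_iff hp.prime _).mp hdQ
    exact hpy j hj
  have hdE : p ^ (α - β) ∣ E := hcop.dvd_of_dvd_mul_right hEQ
  -- rewrite target
  have hne' : S.Nonempty := Finset.card_pos.mp (by omega)
  have htarget : ∑ t ∈ S.powersetCard (S.card - 1), ∏ i ∈ t, (x i / p ^ α) = E := by
    calc ∑ t ∈ S.powersetCard (S.card - 1), ∏ i ∈ t, (x i / p ^ α)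
        = ∑ t ∈ S.powersetCard (S.card - 1), ∏ i ∈ t, y i := by
          refine Finset.sum_congr rfl fun t ht => Finset.prod_congr rfl fun i hi => ?_
          have hiS : i ∈ S := (Finset.mem_powersetCard.mp ht).1 hi
          simp only [hy]
          rw [haS i hiS]
      _ = E := by rw [hE]; exact (aux_sum_powersetCard S hne' y).symm
  rw [htarget]
  exact hdE
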